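/- Let X be a Banach space and M, N closed subspaces of X. If M and N have a common complement in the closure of M + N, then there exist an isomorphism U from M onto N with U restricted to M ∩ N equal to the identity, and a constant C ≥ 1 such that ‖Ux + y‖ ≤ C‖x + y‖ for all x ∈ M and y ∈ N. -/

import Mathlib

theorem stmt_9 {X : Type*} [NormedAddCommGroup X] [NormedSpace ℝ X] [CompleteSpace X]
    (M N : Submodule ℝ X) (hM : IsClosed (M : Set X)) (hN : IsClosed (N : Set X))
    (K : Submodule ℝ X) (hK : IsClosed (K : Set X))
    (hKY : K ≤ (M ⊔ N).topologicalClosure)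
    (h1 : M ⊓ K = ⊥) (h2 : M ⊔ K = (M ⊔ N).topologicalClosure)
    (h3 : N ⊓ K = ⊥) (h4 : N ⊔ K = (M ⊔ N).topologicalClosure) :
    ∃ (U : M ≃L[ℝ] N) (C : ℝ), 1 ≤ C ∧
      (∀ x : M, (x : X) ∈ N → (U x : X) = (x : X)) ∧
      ∀ (x : M) (y : N), ‖(U x : X) + (y : X)‖ ≤ C * ‖(x : X) + (y : X)‖ := by
  set Y := (M ⊔ N).topologicalClosure with hY
  have hYc : IsClosed (Y : Set X) := Submodule.isClosed_topologicalClosure _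
  haveI : CompleteSpace Y := hYc.completeSpace_coe
  have hMY : M ≤ Y := le_trans le_sup_left (Submodule.le_topologicalClosure _)
  have hNY : N ≤ Y := le_trans le_sup_right (Submodule.le_topologicalClosure _)
  set M' : Submodule ℝ Y := M.comap Y.subtype with hM'
  set N' : Submodule ℝ Y := N.comap Y.subtype with hN'
  set K' : Submodule ℝ Y := K.comap Y.subtype with hK'
  have hM'c : IsClosed (M' : Set Y) := hM.preimage continuous_subtype_val
  have hN'c : IsClosed (N' : Set Y) := hN.preimage continuous_subtype_val
  have hK'c : IsClosed (K' : Set Y) := hK.preimage continuous_subtype_val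
  have hinj : Function.Injective (Submodule.map Y.subtype) :=
    Submodule.map_injective_of_injective Y.injective_subtype
  have hsup : ∀ (A : Submodule ℝ X), A ≤ Y → (A.comap Y.subtype) ⊔ K' = ⊤ →
      True := fun _ _ _ => trivial
  have hcM : IsCompl M' K' := by
    constructor
    · rw [disjoint_iff, ← Submodule.comap_inf, h1]
      exact le_bot_iff.mp fun x hx => by
        simpa using (Submodule.mem_comap.mp hx)
    · rw [codisjoint_iff]
      apply hinj
      rw [Submodule.map_sup, Submodule.map_comap_subtype, Submodule.map_comap_subtype,
        inf_of_le_right hMY, inf_of_le_right hKY, h2, Submodule.map_top, Submodule.range_subtype]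
  have hcN : IsCompl N' K' := by
    constructor
    · rw [disjoint_iff, ← Submodule.comap_inf, h3]
      exact le_bot_iff.mp fun x hx => by
        simpa using (Submodule.mem_comap.mp hx)
    · rw [codisjoint_iff]
      apply hinj
      rw [Submodule.map_sup, Submodule.map_comap_subtype, Submodule.map_comap_subtype,
        inf_of_le_right hNY, inf_of_le_right hKY, h4, Submodule.map_top, Submodule.range_subtype]
  set P : Y →L[ℝ] M' := M'.linearProjOfClosedCompl K' hcM hM'c hK'c with hP
  set Q : Y →L[ℝ] N' := N'.linearProjOfClosedCompl K' hcN hN'c hK'c with hQ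
  -- embeddings
  set iM : M →L[ℝ] Y := M.subtypeL.codRestrict Y (fun x => hMY x.2) with hiM
  set iN : N →L[ℝ] Y := N.subtypeL.codRestrict Y (fun x => hNY x.2) with hiN
  set oM : M' →L[ℝ] M := (Y.subtypeL.comp M'.subtypeL).codRestrict M (fun z => z.2) with hoM
  set oN : N' →L[ℝ] N := (Y.subtypeL.comp N'.subtypeL).codRestrict N (fun z => z.2) with hoN
  set u : M →L[ℝ] N := oN.comp (Q.comp iM) with hu
  set v : N →L[ℝ] M := oM.comp (P.comp iN) with hv
  have hQcoe : ⇑Q = ⇑(N'.linearProjOfIsCompl K' hcN) :=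
    Submodule.coe_continuous_linearProjOfClosedCompl' hcN hN'c hK'c
  have hPcoe : ⇑P = ⇑(M'.linearProjOfIsCompl K' hcM) :=
    Submodule.coe_continuous_linearProjOfClosedCompl' hcM hM'c hK'c
  have QL : ∀ w : N', Q (w : Y) = w := by
    intro w; rw [hQcoe]; exact Submodule.linearProjOfIsCompl_apply_left hcN w
  have QR : ∀ w : Y, w ∈ K' → Q w = 0 := by
    intro w hw; rw [hQcoe]; exact Submodule.linearProjOfIsCompl_apply_right' hcN hw
  have PL : ∀ w : M', P (w : Y) = w := by
    intro w; rw [hPcoe]; exact Submodule.linearProjOfIsCompl_apply_left hcM w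
  have PR : ∀ w : Y, w ∈ K' → P w = 0 := by
    intro w hw; rw [hPcoe]; exact Submodule.linearProjOfIsCompl_apply_right' hcM hw
  have hPQ : ∀ z : Y, P ((Q z : Y)) = P z := by
    intro z
    have hz := Submodule.projection_add_projection_eq_self hcN z
    have hzz : z = (Q z : Y) + ((K'.linearProjOfIsCompl N' hcN.symm z : Y)) := by
      rw [hQcoe]; exact hz.symm
    conv_rhs => rw [hzz]
    rw [map_add, PR _ (K'.linearProjOfIsCompl N' hcN.symm z).2, add_zero]
  have hQP : ∀ z : Y, Q ((P z : Y)) = Q z := by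
    intro z
    have hz := Submodule.projection_add_projection_eq_self hcM z
    have hzz : z = (P z : Y) + ((K'.linearProjOfIsCompl M' hcM.symm z : Y)) := by
      rw [hPcoe]; exact hz.symm
    conv_rhs => rw [hzz]
    rw [map_add, QR _ (K'.linearProjOfIsCompl M' hcM.symm z).2, add_zero]
  have hux : ∀ x : M, ((u x : X)) = ((Q (iM x) : Y) : X) := fun x => rfl
  have hvx : ∀ y : N, ((v y : X)) = ((P (iN y) : Y) : X) := fun y => rfl
  have hleft : Function.LeftInverse v u := by
    intro x
    apply Subtype.ext
    rw [hvx]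
    have hNE : iN (u x) = (Q (iM x) : Y) := Subtype.ext (hux x)
    rw [hNE, hPQ]
    have hp : P (iM x) = ⟨iM x, x.2⟩ := PL ⟨iM x, x.2⟩
    rw [hp]; rfl
  have hright : Function.RightInverse v u := by
    intro y
    apply Subtype.ext
    rw [hux]
    have hME : iM (v y) = (P (iN y) : Y) := Subtype.ext (hvx y)
    rw [hME, hQP]
    have hq : Q (iN y) = ⟨iN y, y.2⟩ := QL ⟨iN y, y.2⟩
    rw [hq]; rfl
  refine ⟨ContinuousLinearEquiv.equivOfInverse u v hleft hright, max ‖Q‖ 1, le_max_right _ _,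
    ?_, ?_⟩
  · intro x hx
    have : Q (iM x) = ⟨iM x, hx⟩ := QL ⟨iM x, hx⟩
    show (u x : X) = (x : X)
    rw [hux, this]; rfl
  · intro x y
    show ‖(u x : X) + (y : X)‖ ≤ _
    have hz : ((Q (iM x + iN y) : Y) : X) = (u x : X) + (y : X) := by
      rw [map_add]
      have : Q (iN y) = ⟨iN y, y.2⟩ := QL ⟨iN y, y.2⟩
      rw [this]
      push_cast [hux]
      rfl
    rw [← hz]
    have h1' : ‖((Q (iM x + iN y) : Y) : X)‖ = ‖Q (iM x + iN y)‖ := rfl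
    have h2' : ‖(iM x + iN y : Y)‖ = ‖(x : X) + (y : X)‖ := rfl
    rw [h1', ← h2']
    calc ‖Q (iM x + iN y)‖ ≤ ‖Q‖ * ‖(iM x + iN y : Y)‖ := Q.le_opNorm _
      _ ≤ max ‖Q‖ 1 * ‖(iM x + iN y : Y)‖ :=
        mul_le_mul_of_nonneg_right (le_max_left _ _) (norm_nonneg _)
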